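/- arXiv:2601.01607 — 2 statements merged into one kernel-verified Lean document; each statement's English description precedes it below -/
import Mathlib

section
/- Let μ = (q,s) be an IC, IR, and NPT Γ-mechanism, and let b : ℝ^k → ℝ be its extended buyer payoff function b(x) := sup_{z ∈ ℝ_+^k} [q(z)·x − s(z)]. Then b belongs to B_Γ (b is convex, b(0) = 0, and ∂b(x) ∩ Γ ≠ ∅ for every x ∈ ℝ^k), and for every x ∈ ℝ_+^k the vector q(x) is a subgradient of b at x, i.e., q(x) ∈ ∂b(x) ∩ Γ. -/
open MeasureTheory Filter

noncomputable section

abbrev E (k : ℕ) := EuclideanSpace ℝ (Fin k)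

def orthant (k : ℕ) : Set (E k) := {x | ∀ i, 0 ≤ x i}

/-- The dot product `g · x` on `ℝ^k`. -/
def dotp {k : ℕ} (g x : E k) : ℝ := ∑ i, g i * x i

def IsAlloc {k : ℕ} (Γ : Set (E k)) (q : E k → E k) : Prop :=
  ∀ x ∈ orthant k, q x ∈ Γ

def IsIC {k : ℕ} (q : E k → E k) (s : E k → ℝ) : Prop :=
  ∀ x ∈ orthant k, ∀ y ∈ orthant k, dotp (q x) x - s x ≥ dotp (q y) x - s y

def IsIR {k : ℕ} (q : E k → E k) (s : E k → ℝ) : Prop :=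
  ∀ x ∈ orthant k, 0 ≤ dotp (q x) x - s x

def IsNPT {k : ℕ} (s : E k → ℝ) : Prop :=
  ∀ x ∈ orthant k, 0 ≤ s x

/-- The set of subgradients of `f` at `x`. -/
def Subgrad {k : ℕ} (f : E k → ℝ) (x : E k) : Set (E k) :=
  {g | ∀ y, f y - f x ≥ dotp g (y - x)}

/-- `b ∈ B_Γ`: convex on `ℝ^k`, `b 0 = 0`, and a subgradient in `Γ` at every point. -/
def BClass {k : ℕ} (Γ : Set (E k)) (b : E k → ℝ) : Prop :=
  ConvexOn ℝ Set.univ b ∧ b 0 = 0 ∧ ∀ x, (Subgrad b x ∩ Γ).Nonempty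

/-- One-sided directional derivative `f′(x;y) = lim_{δ→0⁺} (f(x+δy)-f(x))/δ`. -/
def dirDeriv {k : ℕ} (b : E k → ℝ) (x y : E k) : ℝ :=
  limUnder (nhdsWithin (0:ℝ) (Set.Ioi 0)) fun δ => (b (x + δ • y) - b x) / δ

/-- The extended buyer payoff function `b(x) = sup_{z ∈ ℝ₊^k} [q(z)·x − s(z)]`. -/
def extPayoff {k : ℕ} (q : E k → E k) (s : E k → ℝ) (x : E k) : ℝ :=
  sSup ((fun z => dotp (q z) x - s z) '' orthant k)

def SellerFavorable {k : ℕ} (q : E k → E k) (s : E k → ℝ) : Prop :=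
  ∀ x ∈ orthant k, s x = dirDeriv (extPayoff q s) x x - extPayoff q s x


private lemma dotp_sub' {k : ℕ} (g x y : E k) : dotp g (y - x) = dotp g y - dotp g x := by
  simp [dotp, mul_sub, Finset.sum_sub_distrib]

private lemma dotp_zero' {k : ℕ} (g : E k) : dotp g 0 = 0 := by simp [dotp]

private lemma dotp_comb' {k : ℕ} (g x y : E k) (a c : ℝ) :
    dotp g (a • x + c • y) = a * dotp g x + c * dotp g y := by
  simp [dotp, mul_add, Finset.sum_add_distrib, Finset.mul_sum, mul_left_comm]

private lemma dotp_le_norm' {k : ℕ} (g x : E k) : dotp g x ≤ ‖g‖ * ‖x‖ := by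
  have h : dotp g x = inner ℝ g x := by simp [dotp, PiLp.inner_apply, RCLike.inner_apply, mul_comm]
  rw [h]; exact real_inner_le_norm g x

private lemma dotp_cont' {k : ℕ} (x : E k) : Continuous fun g : E k => dotp g x := by
  unfold dotp; fun_prop

/-- the extended buyer payoff function of an IC, IR, NPT mechanism
belongs to `B_Γ`, and `q(x)` is a subgradient of it at every `x ∈ ℝ₊^k`. -/
theorem stmt1 {k : ℕ} (hk : 1 ≤ k) (Γ : Set (E k)) (hΓne : Γ.Nonempty)
    (hΓc : IsCompact Γ) (hΓ : Γ ⊆ orthant k)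
    (q : E k → E k) (s : E k → ℝ)
    (hq : IsAlloc Γ q) (hIC : IsIC q s) (hIR : IsIR q s) (hNPT : IsNPT s) :
    BClass Γ (extPayoff q s) ∧
      ∀ x ∈ orthant k, q x ∈ Subgrad (extPayoff q s) x ∩ Γ := by
  set b := extPayoff q s with hb
  have h0 : (0 : E k) ∈ orthant k := fun i => by simp
  obtain ⟨R, hR⟩ := hΓc.isBounded.exists_norm_le
  have hbdd : ∀ x : E k, BddAbove ((fun z => dotp (q z) x - s z) '' orthant k) := by
    intro x
    refine ⟨R * ‖x‖, ?_⟩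
    rintro r ⟨w, hw, rfl⟩
    show dotp (q w) x - s w ≤ R * ‖x‖
    have h1 : dotp (q w) x ≤ ‖q w‖ * ‖x‖ := dotp_le_norm' _ _
    have h2 : ‖q w‖ ≤ R := hR _ (hq w hw)
    nlinarith [hNPT w hw, norm_nonneg x]
  have hne : ∀ x : E k, ((fun z => dotp (q z) x - s z) '' orthant k).Nonempty :=
    fun x => ⟨_, Set.mem_image_of_mem _ h0⟩
  have hle : ∀ x : E k, ∀ w ∈ orthant k, dotp (q w) x - s w ≤ b x :=
    fun x w hw => le_csSup (hbdd x) (Set.mem_image_of_mem _ hw)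
  have hatt : ∀ x ∈ orthant k, b x = dotp (q x) x - s x := by
    intro x hx
    refine le_antisymm (csSup_le (hne x) ?_) (hle x x hx)
    rintro r ⟨w, hw, rfl⟩
    exact hIC x hx w hw
  have hb0 : b 0 = 0 := by
    have h1 := hatt 0 h0
    have h2 := hIR 0 h0
    have h3 := hNPT 0 h0
    rw [dotp_zero'] at h1 h2
    linarith
  have hsub : ∀ x : E k, (Subgrad b x ∩ Γ).Nonempty := by
    intro x
    have hch : ∀ n : ℕ, ∃ w ∈ orthant k, b x - 1/(n+1) < dotp (q w) x - s w := by
      intro n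
      have hlt : b x - 1/((n:ℝ)+1) < b x := by
        have h : (0:ℝ) < 1/((n:ℝ)+1) := by positivity
        linarith
      obtain ⟨r, hr, hr2⟩ := exists_lt_of_lt_csSup (hne x) hlt
      obtain ⟨w, hw, rfl⟩ := hr
      exact ⟨w, hw, hr2⟩
    choose z hz hz2 using hch
    obtain ⟨g, hgΓ, φ, hφ, hconv⟩ := hΓc.tendsto_subseq (fun n => hq (z n) (hz n))
    have hvlim : Tendsto (fun n : ℕ => dotp (q (z n)) x - s (z n)) atTop (nhds (b x)) := by
      refine tendsto_of_tendsto_of_tendsto_of_le_of_le ?_ tendsto_const_nhds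
        (fun n => le_of_lt (hz2 n)) (fun n => hle x (z n) (hz n))
      have h := tendsto_one_div_add_atTop_nhds_zero_nat.const_sub (b x)
      simpa using h
    have hvphi : Tendsto (fun n : ℕ => dotp (q (z (φ n))) x - s (z (φ n))) atTop (nhds (b x)) :=
      hvlim.comp hφ.tendsto_atTop
    have hdx : Tendsto (fun n : ℕ => dotp (q (z (φ n))) x) atTop (nhds (dotp g x)) :=
      ((dotp_cont' x).tendsto g).comp hconv
    have hslim : Tendsto (fun n : ℕ => s (z (φ n))) atTop (nhds (dotp g x - b x)) := by
      have h := hdx.sub hvphi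
      simpa using h
    refine ⟨g, ?_, hgΓ⟩
    intro y
    have hdy : Tendsto (fun n : ℕ => dotp (q (z (φ n))) y - s (z (φ n))) atTop
        (nhds (dotp g y - (dotp g x - b x))) :=
      (((dotp_cont' y).tendsto g).comp hconv).sub hslim
    have hby : dotp g y - (dotp g x - b x) ≤ b y :=
      le_of_tendsto hdy (Eventually.of_forall fun n => hle y (z (φ n)) (hz (φ n)))
    rw [dotp_sub']
    linarith
  refine ⟨⟨⟨convex_univ, ?_⟩, hb0, hsub⟩, ?_⟩
  · intro x _ y _ a c ha hc hac
    refine csSup_le (hne _) ?_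
    rintro r ⟨w, hw, rfl⟩
    simp only
    rw [dotp_comb']
    have h1 := hle x w hw
    have h2 := hle y w hw
    simp only [smul_eq_mul]
    nlinarith [mul_le_mul_of_nonneg_left h1 ha, mul_le_mul_of_nonneg_left h2 hc, hNPT w hw]
  · intro x hx
    refine ⟨?_, hq x hx⟩
    intro y
    have h1 := hle y x hx
    rw [hatt x hx, dotp_sub']
    linarith
end
end

section
/- Let b ∈ B_Γ. Then there exists an IC, IR, and NPT Γ-mechanism μ* = (q*,s*) whose buyer payoff function equals b on ℝ_+^k and such that s*(x) = b′(x;x) − b(x) for every x ∈ ℝ_+^k (a seller-favorable mechanism); equivalently, q*(x) may be chosen in ∂b(x) ∩ Γ with q*(x)·x = b′(x;x) for every x ∈ ℝ_+^k. -/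
open MeasureTheory Filter

noncomputable section

lemma dotp_eq_inner {k : ℕ} (g x : E k) : dotp g x = inner ℝ g x := by
  simp [dotp, PiLp.inner_apply, RCLike.inner_apply, mul_comm]

lemma dotp_smul_right {k : ℕ} (g x : E k) (c : ℝ) : dotp g (c • x) = c * dotp g x := by
  simp [dotp, Finset.mul_sum]; ring_nf
  exact Finset.sum_congr rfl fun i _ => by ring

lemma dotp_neg_right {k : ℕ} (g x : E k) : dotp g (-x) = -dotp g x := by
  simp [dotp]

lemma dotp_sub_right {k : ℕ} (g x y : E k) : dotp g (x - y) = dotp g x - dotp g y := by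
  simp [dotp, mul_sub, Finset.sum_sub_distrib]

lemma key {k : ℕ} {Γ : Set (E k)} (hΓc : IsCompact Γ) (b : E k → ℝ) (hb : BClass Γ b)
    (x : E k) : ∃ g, g ∈ Subgrad b x ∩ Γ ∧ dotp g x = dirDeriv b x x := by
  obtain ⟨hconv, hb0, hsub⟩ := hb
  have hcont : Continuous b := by
    exact continuousOn_univ.mp (hconv.continuousOn isOpen_univ)
  set Q : ℝ → ℝ := fun δ => (b (x + δ • x) - b x) / δ with hQ
  -- convexity of δ ↦ b (x + δ • x)
  have hφ : ConvexOn ℝ Set.univ (fun δ : ℝ => b (x + δ • x)) := by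
    have h := hconv.comp_affineMap (AffineMap.lineMap x (x + x))
    rw [Set.preimage_univ] at h
    have heq : (fun δ : ℝ => b (x + δ • x)) = b ∘ AffineMap.lineMap x (x + x) := by
      funext δ
      simp only [Function.comp, AffineMap.lineMap_apply, vsub_eq_sub, vadd_eq_add]
      congr 1
      module
    rw [heq]; exact h
  have hmono : MonotoneOn Q (Set.Ioi 0) := by
    intro δ₁ h1 δ₂ h2 hle
    have := hφ.secant_mono (a := 0) (x := δ₁) (y := δ₂) trivial trivial trivial
      (ne_of_gt h1) (ne_of_gt h2) hle
    simpa [hQ] using this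
  -- lower bound from a subgradient at x
  have lb : ∀ g ∈ Subgrad b x, ∀ δ ∈ Set.Ioi (0:ℝ), dotp g x ≤ Q δ := by
    intro g hg δ hδ
    have := hg (x + δ • x)
    rw [add_sub_cancel_left, dotp_smul_right] at this
    rw [hQ]
    rw [le_div_iff₀ hδ]
    linarith
  obtain ⟨g₀, hg₀s, hg₀Γ⟩ := hsub x
  have hbdd : BddBelow (Q '' Set.Ioi 0) := by
    refine ⟨dotp g₀ x, ?_⟩
    rintro r ⟨δ, hδ, rfl⟩
    exact lb g₀ hg₀s δ hδ
  set L := sInf (Q '' Set.Ioi 0) with hL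
  have htend : Tendsto Q (nhdsWithin 0 (Set.Ioi 0)) (nhds L) :=
    hmono.tendsto_nhdsGT hbdd
  have hdd : dirDeriv b x x = L := htend.limUnder_eq
  -- the approximating sequence
  set t : ℕ → ℝ := fun n => 1 + 1 / (n + 1) with ht
  set gs : ℕ → E k := fun n => (hsub (t n • x)).choose with hgs
  have hgsP : ∀ n, gs n ∈ Subgrad b (t n • x) ∩ Γ := fun n => (hsub (t n • x)).choose_spec
  obtain ⟨g, hgΓ, φ, hφm, hgt⟩ := hΓc.tendsto_subseq (fun n => (hgsP n).2)
  have htendt : Tendsto (fun n => t (φ n)) atTop (nhds 1) := by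
    have h1 : Tendsto (fun n : ℕ => 1 + 1/((n:ℝ)+1)) atTop (nhds (1+0)) :=
      tendsto_const_nhds.add tendsto_one_div_add_atTop_nhds_zero_nat
    rw [add_zero] at h1
    exact h1.comp hφm.tendsto_atTop
  have htx : Tendsto (fun n => t (φ n) • x) atTop (nhds x) := by
    simpa using htendt.smul (tendsto_const_nhds (x := x))
  have hdtend : Tendsto (fun n => dotp (gs (φ n)) x) atTop (nhds (dotp g x)) := by
    simp only [dotp_eq_inner]
    exact hgt.inner tendsto_const_nhds
  refine ⟨g, ⟨?_, hgΓ⟩, ?_⟩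
  · -- g ∈ Subgrad b x
    intro y
    have hle : ∀ n, dotp (gs (φ n)) (y - t (φ n) • x) ≤ b y - b (t (φ n) • x) :=
      fun n => (hgsP (φ n)).1 y
    have h1 : Tendsto (fun n => b y - b (t (φ n) • x)) atTop (nhds (b y - b x)) :=
      tendsto_const_nhds.sub ((hcont.tendsto x).comp htx)
    have h2 : Tendsto (fun n => dotp (gs (φ n)) (y - t (φ n) • x)) atTop
        (nhds (dotp g (y - x))) := by
      simp only [dotp_eq_inner]
      exact hgt.inner (tendsto_const_nhds.sub htx)
    exact le_of_tendsto_of_tendsto' h2 h1 hle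
  · -- dotp g x = L
    rw [hdd]
    refine le_antisymm ?_ ?_
    · -- dotp g x ≤ L: g is a subgradient at x
      have hgsg : g ∈ Subgrad b x := by
        intro y
        have hle : ∀ n, dotp (gs (φ n)) (y - t (φ n) • x) ≤ b y - b (t (φ n) • x) :=
          fun n => (hgsP (φ n)).1 y
        have h1 : Tendsto (fun n => b y - b (t (φ n) • x)) atTop (nhds (b y - b x)) :=
          tendsto_const_nhds.sub ((hcont.tendsto x).comp htx)
        have h2 : Tendsto (fun n => dotp (gs (φ n)) (y - t (φ n) • x)) atTop
            (nhds (dotp g (y - x))) := by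
          simp only [dotp_eq_inner]
          exact hgt.inner (tendsto_const_nhds.sub htx)
        exact le_of_tendsto_of_tendsto' h2 h1 hle
      refine le_csInf (by exact ⟨Q 1, 1, by simp, rfl⟩) ?_
      rintro r ⟨δ, hδ, rfl⟩
      exact lb g hgsg δ hδ
    · -- L ≤ dotp g x
      refine ge_of_tendsto' hdtend fun n => ?_
      have hr : (0:ℝ) < 1 / (φ n + 1) := by positivity
      have hQr : Q (1 / (φ n + 1)) ≤ dotp (gs (φ n)) x := by
        have hgn := (hgsP (φ n)).1 x
        have hxt : x - t (φ n) • x = -((1 / (φ n + 1) : ℝ) • x) := by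
          rw [ht]; module
        rw [hxt] at hgn
        rw [dotp_neg_right, dotp_smul_right] at hgn
        have htn : t (φ n) • x = x + (1 / (φ n + 1) : ℝ) • x := by rw [ht]; module
        rw [htn] at hgn
        rw [hQ]
        rw [div_le_iff₀ hr]
        linarith
      exact le_trans (csInf_le hbdd ⟨_, hr, rfl⟩) hQr

/-- every `b ∈ B_Γ` admits a seller-favorable IC, IR, NPT mechanism:
payments `s*(x) = b′(x;x) − b(x)`, with `q*(x) ∈ ∂b(x) ∩ Γ` and `q*(x)·x = b′(x;x)`. -/
theorem stmt4 {k : ℕ} (hk : 1 ≤ k) (Γ : Set (E k)) (hΓne : Γ.Nonempty)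
    (hΓc : IsCompact Γ) (hΓ : Γ ⊆ orthant k)
    (b : E k → ℝ) (hb : BClass Γ b) :
    ∃ q : E k → E k, ∃ s : E k → ℝ,
      IsAlloc Γ q ∧ IsIC q s ∧ IsIR q s ∧ IsNPT s ∧
      (∀ x ∈ orthant k, dotp (q x) x - s x = b x) ∧
      (∀ x ∈ orthant k, s x = dirDeriv b x x - b x) ∧
      (∀ x ∈ orthant k, q x ∈ Subgrad b x ∩ Γ ∧ dotp (q x) x = dirDeriv b x x) := by
  choose q hq hdot using fun x => key hΓc b hb x
  refine ⟨q, fun x => dotp (q x) x - b x, ?_, ?_, ?_, ?_, ?_, ?_, ?_⟩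
  · intro x _; exact (hq x).2
  · intro x hx y hy
    have h := (hq y).1 x
    rw [dotp_sub_right] at h
    simp only [ge_iff_le]
    linarith
  · intro x hx
    obtain ⟨g0, hg0s, hg0Γ⟩ := hb.2.2 0
    have h1 := hg0s x
    rw [sub_zero, hb.2.1, sub_zero] at h1
    have h2 : 0 ≤ dotp g0 x :=
      Finset.sum_nonneg fun i _ => mul_nonneg (hΓ hg0Γ i) (hx i)
    show 0 ≤ dotp (q x) x - (dotp (q x) x - b x)
    linarith
  · intro x hx
    have h := (hq x).1 0
    rw [show (0:E k) - x = -x from zero_sub x, dotp_neg_right, hb.2.1] at h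
    show 0 ≤ dotp (q x) x - b x
    linarith
  · intro x hx; show dotp (q x) x - (dotp (q x) x - b x) = b x; ring
  · intro x hx; show dotp (q x) x - b x = dirDeriv b x x - b x; rw [hdot x]
  · intro x hx; exact ⟨hq x, hdot x⟩
end
end
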